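/- arXiv:2410.15506 — 2 statements merged into one kernel-verified Lean document; each statement's English description precedes it below -/
import Mathlib

section
/- Any code of length n over Σ with minimum relative distance 1 − γ is (1 − ε, L − 1)-combinatorially list decodable where L = ⌊2/ε⌋, provided γ ≤ ε²/2. More precisely, for any set Λ of L distinct codewords, Σ_{j∈[n]} pl_j(Λ) < ε L n. -/
open Classical in
noncomputable def plurality {n : ℕ} {A : Type*} [Fintype A]
    (Λ : Finset (Fin n → A)) (j : Fin n) : ℕ :=
  Finset.univ.sup (fun α : A => (Λ.filter (fun c => c j = α)).card)

open Classical in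
/-- Any code with minimum relative distance `1 - γ` (i.e. distinct codewords agree on at
most `γ·n` coordinates) with `γ ≤ ε²/2` satisfies `∑_j pl_j(Λ) < ε L n` for any `L = ⌊2/ε⌋`
distinct codewords, and is `(1 - ε, L - 1)`-combinatorially list decodable. -/
theorem stmt_6 {n : ℕ} {A : Type*} [Fintype A] (C : Finset (Fin n → A))
    (ε γ : ℝ) (hε : 0 < ε) (hε1 : ε < 1) (hγ : γ ≤ ε ^ 2 / 2)
    (L : ℕ) (hLdef : L = ⌊(2 : ℝ) / ε⌋₊)
    (hagree : ∀ c1 ∈ C, ∀ c2 ∈ C, c1 ≠ c2 →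
      ((Finset.univ.filter (fun j : Fin n => c1 j = c2 j)).card : ℝ) ≤ γ * n) :
    (∀ Λ ⊆ C, Λ.card = L → (∑ j, (plurality Λ j : ℝ)) < ε * L * n) ∧
    (∀ y : Fin n → A,
      (C.filter (fun c => (hammingDist c y : ℝ) ≤ (1 - ε) * n)).card ≤ L - 1) := by
  have hL2 : 2 ≤ L := by
    rw [hLdef, Nat.le_floor_iff (by positivity)]
    rw [le_div_iff₀ hε]
    push_cast
    nlinarith
  have hLle : (L : ℝ) ≤ 2 / ε := by rw [hLdef]; exact Nat.floor_le (by positivity)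
  have hLgt : 2 / ε < (L : ℝ) + 1 := by rw [hLdef]; exact Nat.lt_floor_add_one _
  have hεL1 : ε * L ≤ 2 := by rw [le_div_iff₀ hε] at hLle; linarith
  have hεL2 : 2 - ε < ε * L := by rw [div_lt_iff₀ hε] at hLgt; linarith
  have hx1 : 1 < ε * L := by linarith
  have hkeyprod : (2 - ε * L) * (2 - ε * L) < ε * (ε * L) := by
    calc (2 - ε * L) * (2 - ε * L) ≤ ε * (2 - ε * L) := by
          apply mul_le_mul_of_nonneg_right (by linarith) (by linarith)
      _ < ε * (ε * L) := by
          apply mul_lt_mul_of_pos_left (by linarith) hε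
  have hnum : 2 + (L : ℝ) * ((L : ℝ) - 1) * (ε ^ 2 / 2) < 2 * (ε * L) := by nlinarith [hkeyprod]
  have part1 : ∀ Λ ⊆ C, Λ.card = L → (∑ j, (plurality Λ j : ℝ)) < ε * L * n := by
    intro Λ hΛC hcard
    have hL2' : 1 < Λ.card := by omega
    obtain ⟨c1, hc1, c2, hc2, hne⟩ := Finset.one_lt_card.mp hL2'
    obtain ⟨j0, hj0⟩ := Function.ne_iff.mp hne
    have hn : 0 < n := j0.pos
    have hA : Nonempty A := ⟨c1 j0⟩
    -- per-coordinate bound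
    have hkey : ∀ j : Fin n, 2 * plurality Λ j ≤
        2 + (Λ.offDiag.filter (fun p => p.1 j = p.2 j)).card := by
      intro j
      obtain ⟨α, -, hα⟩ := Finset.exists_mem_eq_sup Finset.univ Finset.univ_nonempty
        (fun α : A => (Λ.filter (fun c => c j = α)).card)
      have hsub : (Λ.filter (fun c => c j = α)).offDiag ⊆
          Λ.offDiag.filter (fun p => p.1 j = p.2 j) := by
        intro p hp
        rw [Finset.mem_offDiag] at hp
        obtain ⟨h1, h2, h3⟩ := hp
        rw [Finset.mem_filter] at h1 h2
        rw [Finset.mem_filter, Finset.mem_offDiag]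
        exact ⟨⟨h1.1, h2.1, h3⟩, h1.2.trans h2.2.symm⟩
      have hcard2 := Finset.card_le_card hsub
      rw [Finset.offDiag_card] at hcard2
      have hpl : plurality Λ j = (Λ.filter (fun c => c j = α)).card := hα
      rw [hpl]
      set m := (Λ.filter (fun c => c j = α)).card with hm
      set K := (Λ.offDiag.filter (fun p => p.1 j = p.2 j)).card with hK
      rcases le_or_gt m 1 with h | h
      · have : 2 * m ≤ 2 := by clear_value m K; clear hm hK hcard2 hpl hα hcard; omega
        exact le_trans this (Nat.le_add_right _ _)
      · have h2 : 2 * (m - 1) ≤ m * (m - 1) := Nat.mul_le_mul_right _ h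
        have h3 : m * (m - 1) = m * m - m := by rw [Nat.mul_sub, Nat.mul_one]
        have h4 : 2 * (m - 1) ≤ K := le_trans h2 (h3 ▸ hcard2)
        clear_value m K
        clear h2 h3 hcard2 hm hK hpl hα hcard
        omega
    have hswap : ∑ j : Fin n, (Λ.offDiag.filter (fun p => p.1 j = p.2 j)).card =
        ∑ p ∈ Λ.offDiag, (Finset.univ.filter (fun j : Fin n => p.1 j = p.2 j)).card := by
      simp_rw [Finset.card_filter]
      exact Finset.sum_comm
    have hsum1 : 2 * ∑ j, (plurality Λ j : ℝ) ≤
        2 * n + ∑ p ∈ Λ.offDiag, ((Finset.univ.filter (fun j : Fin n => p.1 j = p.2 j)).card : ℝ) := by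
      have h := Finset.sum_le_sum (fun j (_ : j ∈ Finset.univ) => hkey j)
      rw [Finset.sum_add_distrib, Finset.sum_const, ← Finset.mul_sum] at h
      have h' : (2 * ∑ j, plurality Λ j : ℕ) ≤
          ((Finset.univ.card (α := Fin n)) • 2 + ∑ j : Fin n,
            (Λ.offDiag.filter (fun p => p.1 j = p.2 j)).card : ℕ) := h
      rw [hswap] at h'
      have := Nat.cast_le (α := ℝ).mpr h'
      push_cast at this
      simpa [Finset.card_univ, mul_comm] using this
    have hpairs : ∑ p ∈ Λ.offDiag, ((Finset.univ.filter (fun j : Fin n => p.1 j = p.2 j)).card : ℝ)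
        ≤ (Λ.offDiag.card : ℝ) * (γ * n) := by
      have := Finset.sum_le_card_nsmul Λ.offDiag
        (fun p => ((Finset.univ.filter (fun j : Fin n => p.1 j = p.2 j)).card : ℝ)) (γ * n)
        (fun p hp => by
          rw [Finset.mem_offDiag] at hp
          exact hagree p.1 (hΛC hp.1) p.2 (hΛC hp.2.1) hp.2.2)
      simpa [nsmul_eq_mul] using this
    have hLL : L ≤ L * L := Nat.le_mul_of_pos_left L (by omega)
    have hoff : (Λ.offDiag.card : ℝ) = (L : ℝ) * L - L := by
      rw [Finset.offDiag_card, hcard]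
      push_cast [Nat.cast_sub hLL]
      ring
    have hoffnn : (0 : ℝ) ≤ (L : ℝ) * L - L := by
      have : (1 : ℝ) ≤ L := by exact_mod_cast Nat.one_le_of_lt hL2
      nlinarith
    have hγn : ((L : ℝ) * L - L) * (γ * n) ≤ ((L : ℝ) * L - L) * (ε ^ 2 / 2 * n) := by
      apply mul_le_mul_of_nonneg_left _ hoffnn
      exact mul_le_mul_of_nonneg_right hγ (Nat.cast_nonneg n)
    have hn1 : (1 : ℝ) ≤ n := by exact_mod_cast hn
    have heq : (Λ.offDiag.card : ℝ) * (γ * n) = ((L : ℝ) * L - L) * (γ * n) := by rw [hoff]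
    have e1 : 2 * (n : ℝ) + ((L : ℝ) * L - L) * (ε ^ 2 / 2 * n)
        = (2 + (L : ℝ) * ((L : ℝ) - 1) * (ε ^ 2 / 2)) * n := by ring
    have e2 := mul_lt_mul_of_pos_right hnum (show (0 : ℝ) < n by linarith)
    linarith
  refine ⟨part1, ?_⟩
  intro y
  by_contra hcon
  push_neg at hcon
  have hge : L ≤ (C.filter (fun c => (hammingDist c y : ℝ) ≤ (1 - ε) * n)).card := by omega
  obtain ⟨Λ, hΛsub, hΛcard⟩ := Finset.exists_subset_card_eq hge
  have hΛC : Λ ⊆ C := hΛsub.trans (Finset.filter_subset _ _)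
  have hlt := part1 Λ hΛC hΛcard
  have hlow : ∀ c ∈ Λ, ε * n ≤ ((Finset.univ.filter (fun j : Fin n => c j = y j)).card : ℝ) := by
    intro c hc
    have hc' := hΛsub hc
    rw [Finset.mem_filter] at hc'
    have hd := hc'.2
    have hdist : hammingDist c y = (Finset.univ.filter (fun j : Fin n => ¬ c j = y j)).card := by
      simp [hammingDist, Finset.filter_filter]
    have hsplit := Finset.card_filter_add_card_filter_not
      (s := (Finset.univ : Finset (Fin n))) (p := fun j => c j = y j)
    rw [Finset.card_univ, Fintype.card_fin] at hsplit
    have : ((Finset.univ.filter (fun j : Fin n => c j = y j)).card : ℝ)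
        = n - hammingDist c y := by
      rw [hdist]
      have := hsplit
      push_cast [← this]
      ring
    rw [this]
    linarith
  have hswap2 : ∑ c ∈ Λ, (Finset.univ.filter (fun j : Fin n => c j = y j)).card =
      ∑ j : Fin n, (Λ.filter (fun c => c j = y j)).card := by
    simp_rw [Finset.card_filter]
    exact Finset.sum_comm
  have hsum2 : (L : ℝ) * (ε * n) ≤ ∑ j, (plurality Λ j : ℝ) := by
    calc (L : ℝ) * (ε * n) = ∑ _c ∈ Λ, ε * n := by
          rw [Finset.sum_const, hΛcard, nsmul_eq_mul]
      _ ≤ ∑ c ∈ Λ, ((Finset.univ.filter (fun j : Fin n => c j = y j)).card : ℝ) :=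
          Finset.sum_le_sum hlow
      _ = ∑ j, ((Λ.filter (fun c => c j = y j)).card : ℝ) := by
          exact_mod_cast hswap2
      _ ≤ ∑ j, (plurality Λ j : ℝ) := by
          apply Finset.sum_le_sum
          intro j _
          exact_mod_cast Finset.le_sup (f := fun α : A => (Λ.filter (fun c => c j = α)).card)
            (Finset.mem_univ (y j))
  nlinarith [hlt, hsum2]
end

section
/- Let 0 < ε < 1 and suppose a code C of length n satisfies the (β, ε/β, L)-plurality condition for every β with ε < β ≤ 1/2, i.e., for any L distinct codewords Λ, the number of coordinates j with pl_j(Λ) ≥ βL is at most (ε/β)·n. Then for any L distinct codewords Λ, Σ_{j∈[n]} pl_j(Λ) ≤ ε·L·n·(ln L + 2). -/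
section aux
open Classical

lemma plur_le_card {n : ℕ} {A : Type*} [Fintype A] (Λ : Finset (Fin n → A)) (j : Fin n) :
    plurality Λ j ≤ Λ.card :=
  Finset.sup_le (fun _ _ => Finset.card_filter_le _ _)

lemma one_le_plur {n : ℕ} {A : Type*} [Fintype A] {Λ : Finset (Fin n → A)}
    (h : Λ.Nonempty) (j : Fin n) : 1 ≤ plurality Λ j := by
  obtain ⟨c, hc⟩ := h
  have : 1 ≤ (Λ.filter (fun c' => c' j = c j)).card := by
    rw [Nat.one_le_iff_ne_zero, ← Nat.pos_iff_ne_zero, Finset.card_pos]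
    exact ⟨c, Finset.mem_filter.2 ⟨hc, rfl⟩⟩
  exact this.trans (Finset.le_sup (f := fun α : A => (Λ.filter (fun c' => c' j = α)).card)
    (Finset.mem_univ (c j)))

lemma harm_le {m : ℕ} : ∑ i ∈ Finset.Icc 1 m, ((i : ℝ))⁻¹ ≤ 1 + Real.log m := by
  have h : ((harmonic m : ℚ) : ℝ) = ∑ i ∈ Finset.Icc 1 m, ((i : ℝ))⁻¹ := by
    rw [harmonic_eq_sum_Icc]; push_cast; ring
  rw [← h]; exact harmonic_le_one_add_log m

end aux

open Classical in
/-- If a code satisfies the `(β, ε/β, L)`-plurality condition for every `ε < β ≤ 1/2`,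
then for any `L` distinct codewords `Λ`, `∑_j pl_j(Λ) ≤ ε·L·n·(ln L + 2)`. -/
theorem stmt_11 {n : ℕ} {A : Type*} [Fintype A] (C : Finset (Fin n → A))
    (ε : ℝ) (hε : 0 < ε) (hε1 : ε < 1) (L : ℕ) (hL : 1 ≤ L)
    (hcond : ∀ β : ℝ, ε < β → β ≤ 1 / 2 → ∀ Λ ⊆ C, Λ.card = L →
      ((Finset.univ.filter (fun j : Fin n => β * L ≤ (plurality Λ j : ℝ))).card : ℝ)
        ≤ (ε / β) * n) :
    ∀ Λ ⊆ C, Λ.card = L →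
      (∑ j, (plurality Λ j : ℝ)) ≤ ε * L * n * (Real.log L + 2) := by
  intro Λ hΛC hΛL
  set p : Fin n → ℕ := fun j => plurality Λ j with hp
  show (∑ j, (p j : ℝ)) ≤ ε * L * n * (Real.log L + 2)
  have hn0 : (0:ℝ) ≤ n := Nat.cast_nonneg n
  have hL0 : (0:ℝ) < L := by exact_mod_cast hL
  have hlogL : 0 ≤ Real.log L := Real.log_natCast_nonneg L
  have hple : ∀ j, p j ≤ L := fun j => hΛL ▸ plur_le_card Λ j
  -- trivial bound
  have htriv : (∑ j, (p j : ℝ)) ≤ n * L := by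
    calc (∑ j, (p j : ℝ)) ≤ ∑ _j : Fin n, (L:ℝ) :=
          Finset.sum_le_sum (fun j _ => by exact_mod_cast hple j)
      _ = n * L := by simp [mul_comm]
  by_cases hhalf : (1:ℝ)/2 ≤ ε
  · -- trivial case
    nlinarith [mul_nonneg (mul_nonneg (mul_nonneg hε.le hL0.le) hn0) hlogL,
      mul_le_mul_of_nonneg_right (mul_le_mul_of_nonneg_right
        (show (1:ℝ) ≤ 2*ε by linarith) hL0.le) hn0]
  push_neg at hhalf
  have hΛne : Λ.Nonempty := Finset.card_pos.1 (hΛL ▸ hL)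
  -- the (1/2)-condition bound
  have hhc := hcond (1/2) hhalf le_rfl Λ hΛC hΛL
  -- small case L = 1
  by_cases hL1 : L = 1
  · subst hL1
    have : (Finset.univ.filter (fun j : Fin n => (1:ℝ)/2 * (1:ℕ) ≤ (plurality Λ j : ℝ))) =
        Finset.univ := by
      apply Finset.filter_true_of_mem
      intro j _
      have := one_le_plur hΛne j
      have : (1:ℝ) ≤ (plurality Λ j : ℝ) := by exact_mod_cast this
      push_cast
      linarith
    rw [this] at hhc
    simp only [Finset.card_univ, Fintype.card_fin] at hhc
    have hhc' : (n:ℝ) ≤ 2 * ε * n := by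
      have h2 : (ε / (1/2)) * n = 2 * ε * n := by ring
      linarith [h2 ▸ hhc]
    calc (∑ j, (p j : ℝ)) ≤ (n:ℝ) * ((1:ℕ):ℝ) := htriv
      _ = (n:ℝ) := by norm_num
      _ ≤ 2 * ε * n := hhc'
      _ = ε * ((1:ℕ):ℝ) * n * (Real.log ((1:ℕ):ℝ) + 2) := by
          push_cast [Real.log_one]
          ring
  have hL2 : 2 ≤ L := by omega
  set m : ℕ := L / 2 with hm
  have hm1 : 1 ≤ m := by omega
  have hmL : m ≤ L := by omega
  -- counting function
  set N : ℕ → ℕ := fun i => (Finset.univ.filter (fun j : Fin n => i ≤ p j)).card with hN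
  -- layer cake identity
  have key : ∑ j : Fin n, p j = ∑ i ∈ Finset.Icc 1 L, N i := by
    have h1 : ∀ j : Fin n, p j = ∑ i ∈ Finset.Icc 1 L, if i ≤ p j then 1 else 0 := by
      intro j
      rw [← Finset.card_filter]
      have : (Finset.Icc 1 L).filter (fun i => i ≤ p j) = Finset.Icc 1 (p j) := by
        ext i
        simp only [Finset.mem_filter, Finset.mem_Icc]
        have := hple j
        omega
      rw [this, Nat.card_Icc]
      omega
    rw [Finset.sum_congr rfl (fun j _ => h1 j), Finset.sum_comm]
    exact Finset.sum_congr rfl (fun i _ => (Finset.card_filter _ _).symm)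
  -- bounds on N
  have hN1 : ∀ i ∈ Finset.Icc 1 m, (N i : ℝ) ≤ n * (ε * L / i) := by
    intro i hi
    rw [Finset.mem_Icc] at hi
    have hi0 : (0:ℝ) < i := by exact_mod_cast hi.1
    by_cases hb : ε * L < i
    · -- use hcond with β = i / L
      have hβ1 : ε < (i:ℝ) / L := by rw [lt_div_iff₀ hL0]; linarith
      have hβ2 : (i:ℝ) / L ≤ 1/2 := by
        rw [div_le_iff₀ hL0]
        have : 2 * i ≤ L := by
          have := hi.2
          omega
        have : (2:ℝ) * i ≤ L := by exact_mod_cast this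
        linarith
      have hc := hcond ((i:ℝ)/L) hβ1 hβ2 Λ hΛC hΛL
      have hset : (Finset.univ.filter (fun j : Fin n => (i:ℝ)/L * L ≤ (plurality Λ j : ℝ))) =
          (Finset.univ.filter (fun j : Fin n => i ≤ p j)) := by
        apply Finset.filter_congr
        intro j _
        rw [div_mul_cancel₀ _ (ne_of_gt hL0)]
        exact_mod_cast Iff.rfl
      rw [hset] at hc
      calc (N i : ℝ) ≤ ε / ((i:ℝ)/L) * n := hc
        _ = n * (ε * L / i) := by field_simp
    · push_neg at hb
      have h1 : (N i : ℝ) ≤ n := by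
        have : N i ≤ n := by
          rw [hN]
          calc (Finset.univ.filter (fun j : Fin n => i ≤ p j)).card ≤ Finset.univ.card :=
            Finset.card_filter_le _ _
          _ = n := by simp
        exact_mod_cast this
      have h2 : (1:ℝ) ≤ ε * L / i := by rw [le_div_iff₀ hi0]; linarith
      nlinarith
  have hN2 : ∀ i ∈ Finset.Icc (m+1) L, (N i : ℝ) ≤ 2 * ε * n := by
    intro i hi
    rw [Finset.mem_Icc] at hi
    have hsub : (Finset.univ.filter (fun j : Fin n => i ≤ p j)) ⊆
        (Finset.univ.filter (fun j : Fin n => (1:ℝ)/2 * L ≤ (plurality Λ j : ℝ))) := by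
      intro j hj
      rw [Finset.mem_filter] at hj ⊢
      refine ⟨hj.1, ?_⟩
      have h1 : (i : ℝ) ≤ (p j : ℝ) := by exact_mod_cast hj.2
      have h2 : (L:ℝ) < 2 * i := by
        have : L < 2 * i := by omega
        exact_mod_cast this
      linarith
    have := Finset.card_le_card hsub
    calc (N i : ℝ) ≤ ((Finset.univ.filter (fun j : Fin n =>
            (1:ℝ)/2 * L ≤ (plurality Λ j : ℝ))).card : ℝ) := by exact_mod_cast this
      _ ≤ ε / (1/2) * n := hhc
      _ = 2 * ε * n := by ring
  -- split the sum
  have hsplit : ∑ i ∈ Finset.Icc 1 L, (N i : ℝ) =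
      ∑ i ∈ Finset.Icc 1 m, (N i : ℝ) + ∑ i ∈ Finset.Icc (m+1) L, (N i : ℝ) := by
    have hU : Finset.Icc 1 L = Finset.Icc 1 m ∪ Finset.Icc (m+1) L := by
      ext i
      simp only [Finset.mem_Icc, Finset.mem_union]
      omega
    have hD : Disjoint (Finset.Icc 1 m) (Finset.Icc (m+1) L) := by
      rw [Finset.disjoint_left]
      intro i hi hi'
      rw [Finset.mem_Icc] at hi hi'
      omega
    rw [hU, Finset.sum_union hD]
  -- sum bounds
  have hS1 : ∑ i ∈ Finset.Icc 1 m, (N i : ℝ) ≤ ε * L * n * (1 + Real.log m) := by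
    calc ∑ i ∈ Finset.Icc 1 m, (N i : ℝ) ≤ ∑ i ∈ Finset.Icc 1 m, n * (ε * L / i) :=
          Finset.sum_le_sum hN1
      _ = n * (ε * L) * ∑ i ∈ Finset.Icc 1 m, ((i:ℝ))⁻¹ := by
          rw [Finset.mul_sum]
          exact Finset.sum_congr rfl (fun i _ => by ring)
      _ ≤ n * (ε * L) * (1 + Real.log m) := by
          apply mul_le_mul_of_nonneg_left harm_le
          positivity
      _ = ε * L * n * (1 + Real.log m) := by ring
  have hS2 : ∑ i ∈ Finset.Icc (m+1) L, (N i : ℝ) ≤ ((L:ℝ) + 1) / 2 * (2 * ε * n) := by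
    calc ∑ i ∈ Finset.Icc (m+1) L, (N i : ℝ) ≤ ∑ _i ∈ Finset.Icc (m+1) L, 2 * ε * n :=
          Finset.sum_le_sum hN2
      _ = ((L - m : ℕ) : ℝ) * (2 * ε * n) := by
          rw [Finset.sum_const, Nat.card_Icc, nsmul_eq_mul,
            show L + 1 - (m+1) = L - m from by omega]
      _ ≤ ((L:ℝ) + 1) / 2 * (2 * ε * n) := by
          apply mul_le_mul_of_nonneg_right _ (by positivity)
          have h : 2 * (L - m) ≤ L + 1 := by omega
          have h' : (2:ℝ) * ((L - m : ℕ):ℝ) ≤ (L:ℝ) + 1 := by exact_mod_cast h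
          linarith
  -- final arithmetic
  have hkey : (∑ j, (p j : ℝ)) = ∑ i ∈ Finset.Icc 1 L, (N i : ℝ) := by
    exact_mod_cast congrArg (Nat.cast : ℕ → ℝ) key
  rw [hkey, hsplit]
  have hlogm : Real.log m ≤ Real.log L - Real.log 2 := by
    have h1 : (m:ℝ) ≤ (L:ℝ) / 2 := by
      have : 2 * m ≤ L := by omega
      have : (2:ℝ) * m ≤ L := by exact_mod_cast this
      linarith
    have h2 : Real.log m ≤ Real.log ((L:ℝ)/2) :=
      Real.log_le_log (by exact_mod_cast hm1) h1
    rwa [Real.log_div (ne_of_gt hL0) (by norm_num)] at h2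
  have hLlog2 : (1:ℝ) ≤ L * Real.log 2 := by
    have h2 : (2:ℝ) ≤ L := by exact_mod_cast hL2
    nlinarith [Real.log_two_gt_d9]
  have hεn : (0:ℝ) ≤ ε * n := by positivity
  have hεLn : (0:ℝ) ≤ ε * L * n := by positivity
  nlinarith [mul_le_mul_of_nonneg_left hlogm hεLn, mul_le_mul_of_nonneg_left hLlog2 hεn]
end
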